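/- (Dixon's discrete fractional Grönwall inequality.) Let γ ∈ (0,1), k > 0, B > 0, λ > 0, and let (aₙ)_{0≤n≤N} be a sequence of nonnegative reals satisfying aₙ ≤ B + (λ/Γ(γ)) k^γ ∑_{m=0}^{n−1} (n−m)^{γ−1} aₘ for all 0 ≤ n ≤ N. Then aₙ ≤ B · E_γ(λ (nk)^γ) for all 0 ≤ n ≤ N, where E_γ(z) = ∑_{j=0}^{∞} z^j / Γ(jγ + 1) is the Mittag-Leffler function. -/

import Mathlib

open Real Filter
open scoped Topology

open MeasureTheory

lemma mlBeta {p q : ℝ} (hp : 0 < p) (hq : 0 < q) :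
    ∫ x in (0:ℝ)..1, x ^ (p-1) * (1-x) ^ (q-1) = Real.Gamma p * Real.Gamma q / Real.Gamma (p+q) := by
  have h := Complex.Gamma_mul_Gamma_eq_betaIntegral (s := (p:ℂ)) (t := (q:ℂ))
    (by simpa using hp) (by simpa using hq)
  have hbeta : Complex.betaIntegral (p:ℂ) (q:ℂ)
      = ((∫ x in (0:ℝ)..1, x ^ (p-1) * (1-x) ^ (q-1) : ℝ) : ℂ) := by
    have h2 : Complex.betaIntegral (p:ℂ) (q:ℂ)
        = ∫ x in (0:ℝ)..1, ((x ^ (p-1) * (1-x) ^ (q-1) : ℝ) : ℂ) := by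
      rw [Complex.betaIntegral]
      refine intervalIntegral.integral_congr fun x hx => ?_
      rw [Set.uIcc_of_le (by norm_num : (0:ℝ) ≤ 1)] at hx
      push_cast
      rw [Complex.ofReal_cpow hx.1 (p-1), Complex.ofReal_cpow (by linarith [hx.2]) (q-1)]
      push_cast; ring
    exact h2.trans (RCLike.intervalIntegral_ofReal (𝕜 := ℂ))
  rw [hbeta, ← Complex.ofReal_add, Complex.Gamma_ofReal, Complex.Gamma_ofReal,
    Complex.Gamma_ofReal, ← Complex.ofReal_mul, ← Complex.ofReal_mul] at h
  have := Complex.ofReal_inj.mp h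
  have hpq : Real.Gamma (p+q) ≠ 0 := (Real.Gamma_pos_of_pos (by linarith)).ne'
  field_simp
  linarith [this]

lemma mlBetaScaled {γ δ t : ℝ} (hγ : 0 < γ) (hδ : 0 ≤ δ) (ht : 0 < t) :
    ∫ s in (0:ℝ)..t, (t - s) ^ (γ-1) * s ^ δ =
      Real.Gamma γ * Real.Gamma (δ+1) / Real.Gamma (γ+δ+1) * t ^ (γ+δ) := by
  have hc : (∫ u in (0:ℝ)..1, (fun s => (t - s) ^ (γ-1) * s ^ δ) (t * u))
      = t⁻¹ • ∫ s in (0:ℝ)..t, (t - s) ^ (γ-1) * s ^ δ := by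
    simpa using intervalIntegral.integral_comp_mul_left
      (f := fun s => (t - s) ^ (γ-1) * s ^ δ) (a := 0) (b := 1) ht.ne'
  have hc2 : (∫ u in (0:ℝ)..1, (fun s => (t - s) ^ (γ-1) * s ^ δ) (t * u))
      = t ^ (γ-1) * t ^ δ * ∫ u in (0:ℝ)..1, u ^ ((δ+1)-1) * (1-u) ^ (γ-1) := by
    rw [← intervalIntegral.integral_const_mul]
    refine intervalIntegral.integral_congr fun u hu => ?_
    rw [Set.uIcc_of_le (by norm_num : (0:ℝ) ≤ 1)] at hu
    have h1 : t - t * u = t * (1 - u) := by ring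
    simp only []
    rw [h1, Real.mul_rpow ht.le (by linarith [hu.2]), Real.mul_rpow ht.le hu.1,
      show δ + 1 - 1 = δ by ring]
    ring
  have hkey := hc.symm.trans hc2
  rw [mlBeta (by linarith) hγ] at hkey
  have : (∫ s in (0:ℝ)..t, (t - s) ^ (γ-1) * s ^ δ)
      = t * (t ^ (γ-1) * t ^ δ * (Real.Gamma (δ+1) * Real.Gamma γ / Real.Gamma (δ+1+γ))) := by
    rw [← hkey, smul_eq_mul, ← mul_assoc, mul_inv_cancel₀ ht.ne', one_mul]
  rw [this]
  have ht1 : t * (t ^ (γ-1) * t ^ δ) = t ^ (γ+δ) := by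
    rw [show t * (t ^ (γ-1) * t ^ δ) = t ^ (1:ℝ) * t ^ (γ-1) * t ^ δ by
        rw [Real.rpow_one]; ring,
      ← Real.rpow_add ht, ← Real.rpow_add ht]
    norm_num
  rw [show Real.Gamma (δ+1+γ) = Real.Gamma (γ+δ+1) by ring_nf]
  rw [show t * (t ^ (γ-1) * t ^ δ * (Real.Gamma (δ+1) * Real.Gamma γ / Real.Gamma (γ+δ+1)))
    = t * (t ^ (γ-1) * t ^ δ) * (Real.Gamma (δ+1) * Real.Gamma γ / Real.Gamma (γ+δ+1)) by ring,
    ht1]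
  ring

lemma mlIntegrable {γ δ t : ℝ} (hγ : γ ∈ Set.Ioo (0:ℝ) 1) (hδ : 0 ≤ δ) (ht : 0 ≤ t) :
    IntervalIntegrable (fun s => (t-s)^(γ-1) * s^δ) volume 0 t := by
  obtain ⟨hγ0, hγ1⟩ := hγ
  have hg0 : IntervalIntegrable (fun x : ℝ => x ^ (γ-1)) volume 0 t :=
    intervalIntegral.intervalIntegrable_rpow' (by linarith)
  have hg1 : IntervalIntegrable (fun s : ℝ => (t-s) ^ (γ-1)) volume 0 t := by
    simpa using (hg0.comp_sub_left t).symm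
  have hg : IntervalIntegrable (fun s : ℝ => (t-s) ^ (γ-1) * t ^ δ) volume 0 t :=
    hg1.mul_const _
  refine hg.mono_fun ?_ ?_
  · refine Measurable.aestronglyMeasurable ?_
    have m0 : Measurable fun s : ℝ => t - s := measurable_const.sub measurable_id
    have m1 : Measurable fun s : ℝ => (t - s) ^ (γ-1) := by
      have : Measurable fun s : ℝ => s ^ (γ-1) := by measurability
      exact this.comp m0
    have m2 : Measurable fun s : ℝ => s ^ δ := by measurability
    exact m1.mul m2
  · rw [Set.uIoc_of_le ht]
    refine MeasureTheory.ae_restrict_of_forall_mem measurableSet_Ioc fun s hs => ?_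
    have h1 : 0 ≤ (t-s) ^ (γ-1) := Real.rpow_nonneg (by linarith [hs.2]) _
    have h2 : 0 ≤ s ^ δ := Real.rpow_nonneg (le_of_lt hs.1) _
    simp only [Real.norm_eq_abs]
    rw [ abs_of_nonneg (mul_nonneg h1 h2),
      abs_of_nonneg (mul_nonneg h1 (Real.rpow_nonneg (le_of_lt (lt_of_lt_of_le hs.1 hs.2)) _))]
    exact mul_le_mul_of_nonneg_left (Real.rpow_le_rpow hs.1.le hs.2 hδ) h1

lemma mlSum {γ δ k : ℝ} (n : ℕ) (hγ : γ ∈ Set.Ioo (0:ℝ) 1) (hδ : 0 ≤ δ) (hk : 0 < k) :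
    ∑ m ∈ Finset.range n, k * (((n:ℝ)*k) - (m:ℝ)*k) ^ (γ-1) * ((m:ℝ)*k) ^ δ ≤
      ∫ s in (0:ℝ)..((n:ℝ)*k), (((n:ℝ)*k) - s) ^ (γ-1) * s ^ δ := by
  obtain ⟨hγ0, hγ1⟩ := hγ
  set t : ℝ := (n:ℝ)*k with htdef
  set f : ℝ → ℝ := fun s => (t - s) ^ (γ-1) * s ^ δ with hfdef
  have ht0 : 0 ≤ t := mul_nonneg (Nat.cast_nonneg n) hk.le
  have hint : IntervalIntegrable f volume 0 t := mlIntegrable ⟨hγ0, hγ1⟩ hδ ht0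
  have hpieces : ∀ m, m < n → IntervalIntegrable f volume ((m:ℝ)*k) (((m:ℝ)+1)*k) := by
    intro m hm
    refine hint.mono_set ?_
    rw [Set.uIcc_of_le (by nlinarith : (m:ℝ)*k ≤ ((m:ℝ)+1)*k), Set.uIcc_of_le ht0]
    have hmn : (m:ℝ) + 1 ≤ (n:ℝ) := by exact_mod_cast Nat.succ_le_of_lt hm
    refine Set.Icc_subset_Icc (by positivity) ?_
    rw [htdef]; nlinarith
  have hsplit : ∑ m ∈ Finset.range n, ∫ s in ((m:ℝ)*k)..(((m:ℝ)+1)*k), f s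
      = ∫ s in (0:ℝ)..t, f s := by
    have := intervalIntegral.sum_integral_adjacent_intervals (μ := volume)
      (a := fun i : ℕ => (i:ℝ)*k) (n := n) (f := f)
      (fun i hi => by push_cast; exact hpieces i hi)
    simpa using this
  rw [← hsplit]
  refine Finset.sum_le_sum fun m hm => ?_
  rw [Finset.mem_range] at hm
  have hmn : (m:ℝ) + 1 ≤ (n:ℝ) := by exact_mod_cast Nat.succ_le_of_lt hm
  have hab : (m:ℝ)*k ≤ ((m:ℝ)+1)*k := by nlinarith
  have hconst : IntervalIntegrable (fun _ : ℝ => f ((m:ℝ)*k)) volume ((m:ℝ)*k) (((m:ℝ)+1)*k) :=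
    intervalIntegrable_const
  have hmono : (fun _ : ℝ => f ((m:ℝ)*k))
      ≤ᵐ[volume.restrict (Set.Icc ((m:ℝ)*k) (((m:ℝ)+1)*k))] f := by
    have hne : ∀ᵐ s : ℝ ∂(volume.restrict (Set.Icc ((m:ℝ)*k) (((m:ℝ)+1)*k))), s ≠ t := by
      refine MeasureTheory.ae_restrict_of_ae ?_
      rw [MeasureTheory.ae_iff]
      have : {s : ℝ | ¬ s ≠ t} = {t} := by ext s; simp
      rw [this]
      exact Real.volume_singleton
    have hmem := MeasureTheory.ae_restrict_mem
      (μ := MeasureTheory.volume) (measurableSet_Icc (a := (m:ℝ)*k) (b := ((m:ℝ)+1)*k))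
    filter_upwards [hne, hmem] with s hsne hsmem
    obtain ⟨hs1, hs2⟩ := hsmem
    have hst : s < t := lt_of_le_of_ne (by nlinarith) hsne
    have hmk0 : 0 ≤ (m:ℝ)*k := by positivity
    have h1 : (t - (m:ℝ)*k) ^ (γ-1) ≤ (t - s) ^ (γ-1) :=
      Real.rpow_le_rpow_of_nonpos (by linarith) (by linarith) (by linarith)
    have h2 : ((m:ℝ)*k) ^ δ ≤ s ^ δ := Real.rpow_le_rpow hmk0 hs1 hδ
    exact mul_le_mul h1 h2 (Real.rpow_nonneg hmk0 _) (Real.rpow_nonneg (by linarith) _)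
  have := intervalIntegral.integral_mono_ae_restrict hab hconst
    (hpieces m hm) hmono
  rw [intervalIntegral.integral_const] at this
  calc k * (t - (m:ℝ)*k) ^ (γ-1) * ((m:ℝ)*k) ^ δ
      = (((m:ℝ)+1)*k - (m:ℝ)*k) • f ((m:ℝ)*k) := by
        rw [smul_eq_mul, hfdef]; ring_nf
    _ ≤ ∫ s in ((m:ℝ)*k)..(((m:ℝ)+1)*k), f s := this

lemma mlKey {γ k lam : ℝ} (hγ : γ ∈ Set.Ioo (0:ℝ) 1) (hk : 0 < k) (hlam : 0 < lam)
    (j n : ℕ) :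
    lam / Real.Gamma γ * k ^ γ *
      ∑ m ∈ Finset.range n, ((n:ℝ) - (m:ℝ)) ^ (γ-1) *
        ((lam * ((m:ℝ)*k) ^ γ) ^ j / Real.Gamma ((j:ℝ)*γ+1))
      ≤ (lam * ((n:ℝ)*k) ^ γ) ^ (j+1) / Real.Gamma (((j:ℝ)+1)*γ+1) := by
  obtain ⟨hγ0, hγ1⟩ := hγ
  have hΓγ : 0 < Real.Gamma γ := Real.Gamma_pos_of_pos hγ0
  set δ : ℝ := (j:ℝ)*γ with hδdef
  have hδ0 : 0 ≤ δ := by positivity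
  have hΓδ : 0 < Real.Gamma (δ+1) := Real.Gamma_pos_of_pos (by linarith)
  have hΓγδ : 0 < Real.Gamma (γ+δ+1) := Real.Gamma_pos_of_pos (by linarith)
  rcases Nat.eq_zero_or_pos n with rfl | hn
  · simp only [Finset.range_zero, Finset.sum_empty, mul_zero]
    positivity
  -- rewrite LHS
  set t : ℝ := (n:ℝ)*k with htdef
  have ht0 : 0 < t := by
    have : (0:ℝ) < (n:ℝ) := by exact_mod_cast hn
    positivity
  have hC : (0:ℝ) ≤ lam^(j+1) / (Real.Gamma γ * Real.Gamma (δ+1)) := by positivity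
  have hLHS : lam / Real.Gamma γ * k ^ γ *
      ∑ m ∈ Finset.range n, ((n:ℝ) - (m:ℝ)) ^ (γ-1) *
        ((lam * ((m:ℝ)*k) ^ γ) ^ j / Real.Gamma ((j:ℝ)*γ+1))
      = lam^(j+1) / (Real.Gamma γ * Real.Gamma (δ+1)) *
        ∑ m ∈ Finset.range n, k * (t - (m:ℝ)*k) ^ (γ-1) * ((m:ℝ)*k) ^ δ := by
    rw [Finset.mul_sum, Finset.mul_sum]
    refine Finset.sum_congr rfl fun m hm => ?_
    rw [Finset.mem_range] at hm
    have hnm : (0:ℝ) ≤ (n:ℝ) - (m:ℝ) := by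
      have : (m:ℝ) ≤ (n:ℝ) := by exact_mod_cast hm.le
      linarith
    have hmk0 : (0:ℝ) ≤ (m:ℝ)*k := by positivity
    have e1 : (lam * ((m:ℝ)*k) ^ γ) ^ j = lam ^ j * ((m:ℝ)*k) ^ δ := by
      rw [mul_pow, ← Real.rpow_natCast (((m:ℝ)*k) ^ γ) j, ← Real.rpow_mul hmk0,
        hδdef, mul_comm γ (j:ℝ)]
    have e2 : t - (m:ℝ)*k = ((n:ℝ) - (m:ℝ)) * k := by rw [htdef]; ring
    have e3 : (t - (m:ℝ)*k) ^ (γ-1) = ((n:ℝ) - (m:ℝ)) ^ (γ-1) * k ^ (γ-1) := by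
      rw [e2, Real.mul_rpow hnm hk.le]
    have e4 : k ^ γ = k * k ^ (γ-1) := by
      rw [show γ = 1 + (γ-1) by ring, Real.rpow_add hk, Real.rpow_one,
        show 1 + (γ-1) - 1 = γ - 1 by ring]
    rw [e1, e3, e4]
    field_simp
    rw [hδdef]; ring
  rw [hLHS]
  have hsum := mlSum (γ := γ) (δ := δ) (k := k) n ⟨hγ0, hγ1⟩ hδ0 hk
  have hbeta := mlBetaScaled (γ := γ) (δ := δ) (t := t) hγ0 hδ0 ht0
  rw [htdef] at hbeta ⊢
  calc lam^(j+1) / (Real.Gamma γ * Real.Gamma (δ+1)) *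
        ∑ m ∈ Finset.range n, k * ((n:ℝ)*k - (m:ℝ)*k) ^ (γ-1) * ((m:ℝ)*k) ^ δ
      ≤ lam^(j+1) / (Real.Gamma γ * Real.Gamma (δ+1)) *
        (Real.Gamma γ * Real.Gamma (δ+1) / Real.Gamma (γ+δ+1) * ((n:ℝ)*k) ^ (γ+δ)) := by
        refine mul_le_mul_of_nonneg_left ?_ hC
        exact le_trans hsum (le_of_eq hbeta)
    _ = (lam * ((n:ℝ)*k) ^ γ) ^ (j+1) / Real.Gamma (((j:ℝ)+1)*γ+1) := by
        have e5 : (lam * ((n:ℝ)*k) ^ γ) ^ (j+1) = lam^(j+1) * ((n:ℝ)*k) ^ (γ+δ) := by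
          rw [mul_pow, ← Real.rpow_natCast (((n:ℝ)*k) ^ γ) (j+1),
            ← Real.rpow_mul (by positivity : (0:ℝ) ≤ (n:ℝ)*k)]
          congr 2
          push_cast
          rw [hδdef]; ring
        have e6 : ((j:ℝ)+1)*γ+1 = γ+δ+1 := by rw [hδdef]; ring
        rw [e5, e6]
        field_simp

lemma mlSummable {γ : ℝ} (hγ0 : 0 < γ) {x : ℝ} (hx : 0 ≤ x) :
    Summable (fun j : ℕ => x ^ j / Real.Gamma ((j:ℝ)*γ+1)) := by
  set K : ℝ := (2*x+2) ^ (1/γ) with hKdef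
  have hK1 : (1:ℝ) ≤ K := Real.one_le_rpow (by linarith) (by positivity)
  have hK0 : (0:ℝ) < K := by linarith
  have hKγ : K ^ γ = 2*x+2 := by
    rw [hKdef, ← Real.rpow_mul (by linarith), one_div, inv_mul_cancel₀ hγ0.ne', Real.rpow_one]
  have htend : Filter.Tendsto (fun m : ℕ => K ^ m / (m.factorial : ℝ)) Filter.atTop (nhds 0) :=
    FloorSemiring.tendsto_pow_div_factorial_atTop K
  obtain ⟨C, hC⟩ := htend.bddAbove_range
  have hCb : ∀ m : ℕ, K ^ m ≤ C * (m.factorial : ℝ) := by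
    intro m
    have h1 : K ^ m / (m.factorial : ℝ) ≤ C := hC (Set.mem_range_self m)
    have h2 : (0:ℝ) < (m.factorial : ℝ) := by exact_mod_cast m.factorial_pos
    calc K ^ m = K ^ m / (m.factorial : ℝ) * (m.factorial : ℝ) := by field_simp
      _ ≤ C * (m.factorial : ℝ) := by nlinarith
  have hC0 : (0:ℝ) < C := by
    have h := hCb 0
    norm_num at h
    nlinarith
  set j₀ : ℕ := ⌈2/γ⌉₊ with hj₀
  rw [← summable_nat_add_iff j₀]
  have hbound : ∀ j : ℕ, x ^ (j + j₀) / Real.Gamma (((j + j₀ : ℕ):ℝ)*γ+1)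
      ≤ (C * K) * (1/2 : ℝ) ^ (j + j₀) := by
    intro j
    set i : ℕ := j + j₀ with hi
    have hij : (2:ℝ)/γ ≤ (i:ℝ) := by
      calc (2:ℝ)/γ ≤ (j₀:ℝ) := Nat.le_ceil _
        _ ≤ (i:ℝ) := by exact_mod_cast Nat.le_add_left j₀ j
    have hi2 : (2:ℝ) ≤ (i:ℝ)*γ := by
      rw [div_le_iff₀ hγ0] at hij; linarith
    set m : ℕ := ⌊(i:ℝ)*γ⌋₊ with hm
    have hm2 : (2:ℕ) ≤ m := by
      rw [hm]; exact Nat.le_floor (by exact_mod_cast hi2)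
    have hmle : (m:ℝ) ≤ (i:ℝ)*γ := Nat.floor_le (by positivity)
    have hmgt : (i:ℝ)*γ < (m:ℝ) + 1 := Nat.lt_floor_add_one _
    have hΓmono : (m.factorial : ℝ) ≤ Real.Gamma ((i:ℝ)*γ+1) := by
      have h2m : (2:ℝ) ≤ (m:ℝ)+1 := by
        have : (2:ℝ) ≤ (m:ℝ) := by exact_mod_cast hm2
        linarith
      have := Real.Gamma_strictMonoOn_Ici.monotoneOn
        (Set.mem_Ici.mpr h2m) (Set.mem_Ici.mpr (by linarith : (2:ℝ) ≤ (i:ℝ)*γ+1))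
        (by linarith)
      rwa [Real.Gamma_nat_eq_factorial] at this
    have hfac : (0:ℝ) < (m.factorial : ℝ) := by exact_mod_cast m.factorial_pos
    have hΓpos : (0:ℝ) < Real.Gamma ((i:ℝ)*γ+1) := Real.Gamma_pos_of_pos (by positivity)
    have hxi : (0:ℝ) ≤ x ^ i := pow_nonneg hx i
    have step1 : x ^ i / Real.Gamma ((i:ℝ)*γ+1) ≤ x ^ i / (m.factorial : ℝ) := by
      rw [div_le_div_iff₀ hΓpos hfac]; nlinarith
    have hKm : K ^ ((i:ℝ)*γ) / K ≤ K ^ m := by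
      have h1 : K ^ ((i:ℝ)*γ - 1) ≤ K ^ ((m:ℝ)) :=
        Real.rpow_le_rpow_of_exponent_le hK1 (by linarith)
      rw [Real.rpow_sub hK0, Real.rpow_one] at h1
      rwa [Real.rpow_natCast] at h1
    have hKmpos : (0:ℝ) < K ^ m := pow_pos hK0 m
    have hKigpos : (0:ℝ) < K ^ ((i:ℝ)*γ) := Real.rpow_pos_of_pos hK0 _
    have step2 : x ^ i / (m.factorial : ℝ) ≤ x ^ i * C / K ^ m := by
      rw [div_le_div_iff₀ hfac hKmpos]
      have := hCb m
      nlinarith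
    have step3 : x ^ i * C / K ^ m ≤ x ^ i * C * K / K ^ ((i:ℝ)*γ) := by
      rw [div_le_div_iff₀ hKmpos hKigpos]
      have hKm' : K ^ ((i:ℝ)*γ) ≤ K ^ m * K := by
        rw [div_le_iff₀ hK0] at hKm; linarith
      nlinarith [mul_nonneg (mul_nonneg hxi hC0.le) hK0.le]
    have hKig : K ^ ((i:ℝ)*γ) = (2*x+2) ^ i := by
      rw [mul_comm (i:ℝ) γ, Real.rpow_mul hK0.le, hKγ, Real.rpow_natCast]
    have step4 : x ^ i * C * K / K ^ ((i:ℝ)*γ) ≤ (C * K) * (1/2 : ℝ) ^ i := by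
      rw [hKig]
      have h2x : (0:ℝ) < 2*x+2 := by linarith
      have hfrac : x / (2*x+2) ≤ 1/2 := by rw [div_le_div_iff₀ h2x (by norm_num)]; linarith
      have hfrac0 : (0:ℝ) ≤ x / (2*x+2) := by positivity
      have hp : (x / (2*x+2)) ^ i ≤ (1/2 : ℝ) ^ i := pow_le_pow_left₀ hfrac0 hfrac i
      have heq : x ^ i * C * K / (2*x+2) ^ i = (C * K) * (x/(2*x+2)) ^ i := by
        rw [div_pow]; field_simp
      rw [heq]
      have := mul_le_mul_of_nonneg_left hp (by positivity : (0:ℝ) ≤ C * K)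
      linarith
    calc x ^ i / Real.Gamma ((i:ℝ)*γ+1) ≤ x ^ i / (m.factorial : ℝ) := step1
      _ ≤ x ^ i * C / K ^ m := step2
      _ ≤ x ^ i * C * K / K ^ ((i:ℝ)*γ) := step3
      _ ≤ (C * K) * (1/2 : ℝ) ^ i := step4
  refine Summable.of_nonneg_of_le (fun j => ?_) hbound ?_
  · have : (0:ℝ) < Real.Gamma (((j + j₀ : ℕ):ℝ)*γ+1) :=
      Real.Gamma_pos_of_pos (by positivity)
    positivity
  · have hg : Summable (fun j : ℕ => ((C*K) * (1/2:ℝ)^j₀) * (1/2:ℝ)^j) :=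
      (summable_geometric_of_lt_one (by norm_num) (by norm_num)).mul_left _
    refine hg.congr fun j => ?_
    rw [pow_add]; ring

/-- Dixon's discrete fractional Grönwall inequality, with the
Mittag-Leffler function `E_γ(z) = ∑_{j=0}^∞ z^j / Γ(jγ + 1)`. -/
theorem stmt18 (γ k B lam : ℝ) (N : ℕ) (a : ℕ → ℝ)
    (hγ : γ ∈ Set.Ioo (0:ℝ) 1) (hk : 0 < k) (hB : 0 < B) (hlam : 0 < lam)
    (ha : ∀ n ≤ N, 0 ≤ a n)
    (hrec : ∀ n ≤ N, a n ≤ B + lam / Real.Gamma γ * k ^ γ *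
      ∑ m ∈ Finset.range n, ((n : ℝ) - m) ^ (γ - 1) * a m) :
    ∀ n ≤ N, a n ≤ B * ∑' j : ℕ, (lam * ((n : ℝ) * k) ^ γ) ^ j / Real.Gamma (j * γ + 1) := by
  obtain ⟨hγ0, hγ1⟩ := hγ
  set c : ℕ → ℕ → ℝ := fun j n => (lam * ((n:ℝ)*k) ^ γ) ^ j / Real.Gamma ((j:ℝ)*γ+1)
    with hcdef
  have hcnonneg : ∀ j n, 0 ≤ c j n := by
    intro j n
    have h1 : (0:ℝ) < Real.Gamma ((j:ℝ)*γ+1) := Real.Gamma_pos_of_pos (by positivity)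
    have h2 : (0:ℝ) ≤ lam * ((n:ℝ)*k) ^ γ := by positivity
    simp only [hcdef]
    positivity
  have hc0 : ∀ n, c 0 n = 1 := by
    intro n
    simp [hcdef, Real.Gamma_one]
  set M : ℝ := ∑ m ∈ Finset.range (N+1), a m with hMdef
  have haM : ∀ n ≤ N, a n ≤ M := by
    intro n hn
    exact Finset.single_le_sum (fun m hm => ha m (by simp at hm; omega))
      (by simp; omega)
  set CC : ℝ := lam / Real.Gamma γ * k ^ γ with hCC
  have hΓγ : (0:ℝ) < Real.Gamma γ := Real.Gamma_pos_of_pos hγ0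
  have hCC0 : 0 ≤ CC := by positivity
  have pull : ∀ (r : ℝ) (g : ℕ → ℝ) (s : Finset ℕ),
      r * ∑ x ∈ s, g x = ∑ x ∈ s, r * g x := fun r g s => Finset.mul_sum s g r
  have hkey : ∀ j n : ℕ, CC * ∑ m ∈ Finset.range n, ((n:ℝ) - (m:ℝ)) ^ (γ-1) * c j m
      ≤ c (j+1) n := by
    intro j n
    have h := mlKey ⟨hγ0, hγ1⟩ hk hlam j n
    simp only [hcdef]
    push_cast
    exact h
  -- main induction
  have hind : ∀ J : ℕ, ∀ n ≤ N,
      a n ≤ B * ∑ j ∈ Finset.range J, c j n + M * c J n := by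
    intro J
    induction J with
    | zero =>
      intro n hn
      simp only [Finset.range_zero, Finset.sum_empty, mul_zero, zero_add, hc0, mul_one]
      exact haM n hn
    | succ J ih =>
      intro n hn
      have hwn : ∀ m : ℕ, m < n → (0:ℝ) ≤ ((n:ℝ) - (m:ℝ)) ^ (γ-1) := by
        intro m hm
        have : (m:ℝ) ≤ (n:ℝ) := by exact_mod_cast hm.le
        exact Real.rpow_nonneg (by linarith) _
      have hstep1 : a n ≤ B + CC * ∑ m ∈ Finset.range n,
          ((n:ℝ) - (m:ℝ)) ^ (γ-1) * (B * ∑ j ∈ Finset.range J, c j m + M * c J m) := by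
        refine le_trans (hrec n hn) ?_
        have h : ∑ m ∈ Finset.range n, ((n:ℝ) - (m:ℝ)) ^ (γ-1) * a m
            ≤ ∑ m ∈ Finset.range n,
              ((n:ℝ) - (m:ℝ)) ^ (γ-1) * (B * ∑ j ∈ Finset.range J, c j m + M * c J m) := by
          refine Finset.sum_le_sum fun m hm => ?_
          rw [Finset.mem_range] at hm
          exact mul_le_mul_of_nonneg_left (ih m (by omega)) (hwn m hm)
        exact add_le_add (le_refl B) (mul_le_mul_of_nonneg_left h hCC0)
      have hswap : CC * ∑ m ∈ Finset.range n,
            ((n:ℝ) - (m:ℝ)) ^ (γ-1) * (B * ∑ j ∈ Finset.range J, c j m + M * c J m)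
          = B * ∑ j ∈ Finset.range J,
              (CC * ∑ m ∈ Finset.range n, ((n:ℝ) - (m:ℝ)) ^ (γ-1) * c j m)
            + M * (CC * ∑ m ∈ Finset.range n, ((n:ℝ) - (m:ℝ)) ^ (γ-1) * c J m) := by
        have lhs_eq : CC * ∑ m ∈ Finset.range n,
              ((n:ℝ) - (m:ℝ)) ^ (γ-1) * (B * ∑ j ∈ Finset.range J, c j m + M * c J m)
            = (∑ j ∈ Finset.range J, ∑ m ∈ Finset.range n,
                (CC * B * ((n:ℝ) - (m:ℝ)) ^ (γ-1)) * c j m)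
              + ∑ m ∈ Finset.range n, (CC * M) * (((n:ℝ) - (m:ℝ)) ^ (γ-1) * c J m) := by
          rw [pull]
          rw [Finset.sum_congr rfl (fun (m : ℕ) _ => show
            CC * (((n:ℝ) - (m:ℝ)) ^ (γ-1) * (B * ∑ j ∈ Finset.range J, c j m + M * c J m))
              = (∑ j ∈ Finset.range J, (CC * B * ((n:ℝ) - (m:ℝ)) ^ (γ-1)) * c j m)
                + (CC * M) * (((n:ℝ) - (m:ℝ)) ^ (γ-1) * c J m) from by
            rw [← pull]; ring)]
          rw [Finset.sum_add_distrib, Finset.sum_comm]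
        have rhs_eq : B * ∑ j ∈ Finset.range J,
              (CC * ∑ m ∈ Finset.range n, ((n:ℝ) - (m:ℝ)) ^ (γ-1) * c j m)
            + M * (CC * ∑ m ∈ Finset.range n, ((n:ℝ) - (m:ℝ)) ^ (γ-1) * c J m)
            = (∑ j ∈ Finset.range J, ∑ m ∈ Finset.range n,
                (CC * B * ((n:ℝ) - (m:ℝ)) ^ (γ-1)) * c j m)
              + ∑ m ∈ Finset.range n, (CC * M) * (((n:ℝ) - (m:ℝ)) ^ (γ-1) * c J m) := by
          rw [pull B]
          congr 1
          · refine Finset.sum_congr rfl fun j _ => ?_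
            rw [pull CC, pull B]
            exact Finset.sum_congr rfl fun m _ => by ring
          · rw [pull CC, pull M]
            exact Finset.sum_congr rfl fun m _ => by ring
        rw [lhs_eq, rhs_eq]
      have hstep2 : B + CC * ∑ m ∈ Finset.range n,
            ((n:ℝ) - (m:ℝ)) ^ (γ-1) * (B * ∑ j ∈ Finset.range J, c j m + M * c J m)
          ≤ B * ∑ j ∈ Finset.range (J+1), c j n + M * c (J+1) n := by
        rw [hswap]
        have h1 : B * ∑ j ∈ Finset.range J,
              (CC * ∑ m ∈ Finset.range n, ((n:ℝ) - (m:ℝ)) ^ (γ-1) * c j m)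
            ≤ B * ∑ j ∈ Finset.range J, c (j+1) n :=
          mul_le_mul_of_nonneg_left (Finset.sum_le_sum fun j _ => hkey j n) hB.le
        have h2 : M * (CC * ∑ m ∈ Finset.range n, ((n:ℝ) - (m:ℝ)) ^ (γ-1) * c J m)
            ≤ M * c (J+1) n := by
          refine mul_le_mul_of_nonneg_left (hkey J n) ?_
          exact Finset.sum_nonneg fun m hm => ha m (by simp at hm; omega)
        have h3 : B * ∑ j ∈ Finset.range (J+1), c j n
            = B + B * ∑ j ∈ Finset.range J, c (j+1) n := by
          rw [Finset.sum_range_succ', hc0, mul_add, mul_one, add_comm]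
        rw [h3]
        linarith
      exact le_trans hstep1 hstep2
  -- pass to the limit
  intro n hn
  have hsum : Summable (fun j : ℕ => c j n) := by
    simp only [hcdef]
    exact mlSummable hγ0 (by positivity)
  have htend : Filter.Tendsto
      (fun J : ℕ => B * ∑ j ∈ Finset.range J, c j n + M * c J n)
      Filter.atTop (𝓝 (B * (∑' j : ℕ, c j n) + M * 0)) :=
    (hsum.hasSum.tendsto_sum_nat.const_mul B).add (hsum.tendsto_atTop_zero.const_mul M)
  have hfin : a n ≤ B * (∑' j : ℕ, c j n) + M * 0 :=
    ge_of_tendsto' htend (fun J => hind J n hn)  -- careful direction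
  simp only [mul_zero, add_zero] at hfin
  simpa only [hcdef] using hfin
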